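/- Let N ≤ N_R be positive integers and let p(t, a) = Σ_{n=0}^∞ A_n(a) Σ_{m=0}^n binom(n,m) (−1)^m t^{N+n−m−1} e^{−t}/(N+n−m−1)! for t > 0 and a ∈ ℝ. Then for every fixed t > 0 the function a ↦ p(t, a) is differentiable on ℝ, and for every t > 0 and a ∈ ℝ, a · ∂_a p(t, a) = − p(t, a) + (N − t − 2) · p^{(1)}(t, a) − t · p^{(2)}(t, a), where ∂_a denotes the partial derivative with respect to a. -/

import Mathlib

/-- Pochhammer symbol `(x)ₙ = x (x+1) ⋯ (x+n-1)`. -/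
noncomputable def poch (x : ℝ) (n : ℕ) : ℝ := ∏ i ∈ Finset.range n, (x + i)

/-- `A_n(a) = ((N)_n/(N_R)_n) aⁿ/n!`. -/
noncomputable def Acoef (N NR : ℕ) (a : ℝ) (n : ℕ) : ℝ :=
  (poch N n / poch NR n) * a ^ n / (n.factorial : ℝ)

/-- The (normalized) ZF SNR density
`p(t,a) = Σ_n A_n(a) Σ_{m=0}^n C(n,m) (−1)^m t^{N+n−m−1} e^{−t}/(N+n−m−1)!`. -/
noncomputable def pdfZF (N NR : ℕ) (t a : ℝ) : ℝ :=
  ∑' n : ℕ, Acoef N NR a n *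
    ∑ m ∈ Finset.range (n + 1),
      (n.choose m : ℝ) * (-1 : ℝ) ^ m * t ^ (N + n - m - 1) * Real.exp (-t)
        / ((N + n - m - 1).factorial : ℝ)

namespace Stmt11Aux
open Finset
noncomputable def M0 (k : ℕ) (t : ℝ) : ℝ := t ^ k * Real.exp (-t) / k.factorial
noncomputable def M1 (k : ℕ) (t : ℝ) : ℝ :=
  ((k : ℝ) * t ^ (k - 1) - t ^ k) * Real.exp (-t) / k.factorial
noncomputable def M2 (k : ℕ) (t : ℝ) : ℝ :=
  ((k : ℝ) * (((k - 1 : ℕ)) : ℝ) * t ^ (k - 1 - 1) - 2 * (k : ℝ) * t ^ (k - 1) + t ^ k)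
    * Real.exp (-t) / k.factorial

lemma expDeriv (t : ℝ) : HasDerivAt (fun t : ℝ => Real.exp (-t)) (-Real.exp (-t)) t := by
  simpa using (hasDerivAt_neg t).exp

lemma hM0 (k : ℕ) (t : ℝ) : HasDerivAt (fun t => M0 k t) (M1 k t) t := by
  have h := ((hasDerivAt_pow k t).mul (expDeriv t)).div_const (k.factorial : ℝ)
  exact h.congr_deriv (by unfold M1; ring)

lemma hM1 (k : ℕ) (t : ℝ) : HasDerivAt (fun t => M1 k t) (M2 k t) t := by
  have hp : HasDerivAt (fun t : ℝ => (k : ℝ) * t ^ (k - 1) - t ^ k)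
      ((k : ℝ) * (((k - 1 : ℕ) : ℝ) * t ^ (k - 1 - 1)) - (k : ℝ) * t ^ (k - 1)) t :=
    ((hasDerivAt_pow (k - 1) t).const_mul _).sub (hasDerivAt_pow k t)
  have h := (hp.mul (expDeriv t)).div_const (k.factorial : ℝ)
  exact h.congr_deriv (by unfold M2; ring)

lemma aux0 {t T : ℝ} (h0 : 0 ≤ t) (hT : t ≤ T) (k : ℕ) :
    t ^ k / (k.factorial : ℝ) ≤ Real.exp T :=
  (Real.pow_div_factorial_le_exp t h0 k).trans (Real.exp_le_exp.2 hT)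

lemma aux1 {t T : ℝ} (h0 : 0 ≤ t) (hT : t ≤ T) (k : ℕ) :
    (k : ℝ) * t ^ (k - 1) / (k.factorial : ℝ) ≤ Real.exp T := by
  cases k with
  | zero => simpa using (Real.exp_pos T).le
  | succ k =>
      have hf : ((k + 1).factorial : ℝ) = ((k : ℝ) + 1) * (k.factorial : ℝ) := by
        rw [Nat.factorial_succ]; push_cast; ring
      have hne : (k.factorial : ℝ) ≠ 0 := by positivity
      have : ((k + 1 : ℕ) : ℝ) * t ^ (k + 1 - 1) / ((k + 1).factorial : ℝ)
          = t ^ k / (k.factorial : ℝ) := by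
        rw [hf]; push_cast; field_simp
      rw [this]; exact aux0 h0 hT k

lemma aux2 {t T : ℝ} (h0 : 0 ≤ t) (hT : t ≤ T) (k : ℕ) :
    (k : ℝ) * (((k - 1 : ℕ)) : ℝ) * t ^ (k - 1 - 1) / (k.factorial : ℝ) ≤ Real.exp T := by
  match k with
  | 0 => simpa using (Real.exp_pos T).le
  | 1 => simpa using (Real.exp_pos T).le
  | (k + 2) =>
      have hf : ((k + 2).factorial : ℝ) = ((k : ℝ) + 2) * (((k : ℝ) + 1) * (k.factorial : ℝ)) := by
        rw [Nat.factorial_succ, Nat.factorial_succ]; push_cast; ring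
      have hne : (k.factorial : ℝ) ≠ 0 := by positivity
      have : ((k + 2 : ℕ) : ℝ) * (((k + 2 - 1 : ℕ)) : ℝ) * t ^ (k + 2 - 1 - 1) / ((k + 2).factorial : ℝ)
          = t ^ k / (k.factorial : ℝ) := by
        rw [hf]; push_cast; field_simp
      rw [this]; exact aux0 h0 hT k

lemma absM0 {t T : ℝ} (h0 : 0 ≤ t) (hT : t ≤ T) (k : ℕ) : |M0 k t| ≤ Real.exp T := by
  have he : Real.exp (-t) ≤ 1 := by
    calc Real.exp (-t) ≤ Real.exp 0 := Real.exp_le_exp.2 (by linarith)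
    _ = 1 := Real.exp_zero
  have h1 : |M0 k t| = t ^ k * Real.exp (-t) / k.factorial := by
    unfold M0; rw [abs_of_nonneg]; positivity
  rw [h1]
  calc t ^ k * Real.exp (-t) / (k.factorial : ℝ) ≤ t ^ k * 1 / (k.factorial : ℝ) := by
        gcongr
  _ = t ^ k / (k.factorial : ℝ) := by ring
  _ ≤ Real.exp T := aux0 h0 hT k

lemma absM1 {t T : ℝ} (h0 : 0 ≤ t) (hT : t ≤ T) (k : ℕ) : |M1 k t| ≤ 2 * Real.exp T := by
  have he : Real.exp (-t) ≤ 1 := by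
    calc Real.exp (-t) ≤ Real.exp 0 := Real.exp_le_exp.2 (by linarith)
    _ = 1 := Real.exp_zero
  have habs : |((k : ℝ) * t ^ (k - 1) - t ^ k)| ≤ (k : ℝ) * t ^ (k - 1) + t ^ k := by
    have := abs_sub ((k : ℝ) * t ^ (k - 1)) (t ^ k)
    calc |((k : ℝ) * t ^ (k - 1) - t ^ k)| ≤ |(k : ℝ) * t ^ (k - 1)| + |t ^ k| := this
    _ = (k : ℝ) * t ^ (k - 1) + t ^ k := by
        rw [abs_of_nonneg (by positivity), abs_of_nonneg (by positivity)]
  have h1 : |M1 k t| ≤ ((k : ℝ) * t ^ (k - 1) + t ^ k) * Real.exp (-t) / k.factorial := by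
    unfold M1
    rw [abs_div, abs_mul, abs_of_nonneg (Real.exp_pos _).le, abs_of_nonneg (by positivity : (0:ℝ) ≤ (k.factorial : ℝ))]
    gcongr
  calc |M1 k t| ≤ ((k : ℝ) * t ^ (k - 1) + t ^ k) * Real.exp (-t) / k.factorial := h1
  _ ≤ ((k : ℝ) * t ^ (k - 1) + t ^ k) * 1 / k.factorial := by gcongr
  _ = (k : ℝ) * t ^ (k - 1) / k.factorial + t ^ k / k.factorial := by ring
  _ ≤ Real.exp T + Real.exp T := add_le_add (aux1 h0 hT k) (aux0 h0 hT k)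
  _ = 2 * Real.exp T := by ring

lemma absM2 {t T : ℝ} (h0 : 0 ≤ t) (hT : t ≤ T) (k : ℕ) : |M2 k t| ≤ 4 * Real.exp T := by
  have he : Real.exp (-t) ≤ 1 := by
    calc Real.exp (-t) ≤ Real.exp 0 := Real.exp_le_exp.2 (by linarith)
    _ = 1 := Real.exp_zero
  have habs : |((k : ℝ) * (((k - 1 : ℕ)) : ℝ) * t ^ (k - 1 - 1) - 2 * (k : ℝ) * t ^ (k - 1) + t ^ k)|
      ≤ (k : ℝ) * (((k - 1 : ℕ)) : ℝ) * t ^ (k - 1 - 1) + 2 * ((k : ℝ) * t ^ (k - 1)) + t ^ k := by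
    calc |((k : ℝ) * (((k - 1 : ℕ)) : ℝ) * t ^ (k - 1 - 1) - 2 * (k : ℝ) * t ^ (k - 1) + t ^ k)|
        ≤ |((k : ℝ) * (((k - 1 : ℕ)) : ℝ) * t ^ (k - 1 - 1) - 2 * (k : ℝ) * t ^ (k - 1))| + |t ^ k| :=
          abs_add_le _ _
    _ ≤ |(k : ℝ) * (((k - 1 : ℕ)) : ℝ) * t ^ (k - 1 - 1)| + |2 * (k : ℝ) * t ^ (k - 1)| + |t ^ k| := by
          have := abs_sub ((k : ℝ) * (((k - 1 : ℕ)) : ℝ) * t ^ (k - 1 - 1)) (2 * (k : ℝ) * t ^ (k - 1))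
          linarith
    _ = (k : ℝ) * (((k - 1 : ℕ)) : ℝ) * t ^ (k - 1 - 1) + 2 * ((k : ℝ) * t ^ (k - 1)) + t ^ k := by
          rw [abs_of_nonneg (by positivity), abs_of_nonneg (by positivity),
            abs_of_nonneg (by positivity)]
          ring
  have h1 : |M2 k t| ≤ ((k : ℝ) * (((k - 1 : ℕ)) : ℝ) * t ^ (k - 1 - 1) + 2 * ((k : ℝ) * t ^ (k - 1)) + t ^ k)
      * Real.exp (-t) / k.factorial := by
    unfold M2
    rw [abs_div, abs_mul, abs_of_nonneg (Real.exp_pos _).le, abs_of_nonneg (by positivity : (0:ℝ) ≤ (k.factorial : ℝ))]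
    gcongr
  calc |M2 k t| ≤ _ := h1
  _ ≤ ((k : ℝ) * (((k - 1 : ℕ)) : ℝ) * t ^ (k - 1 - 1) + 2 * ((k : ℝ) * t ^ (k - 1)) + t ^ k) * 1 / k.factorial := by
        gcongr
  _ = (k : ℝ) * (((k - 1 : ℕ)) : ℝ) * t ^ (k - 1 - 1) / k.factorial
      + 2 * ((k : ℝ) * t ^ (k - 1) / k.factorial) + t ^ k / k.factorial := by ring
  _ ≤ Real.exp T + 2 * Real.exp T + Real.exp T := by
        have := aux1 h0 hT k
        have := aux0 h0 hT k
        have := aux2 h0 hT k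
        linarith
  _ = 4 * Real.exp T := by ring

noncomputable def Cc (n m : ℕ) : ℝ := (n.choose m : ℝ) * (-1 : ℝ) ^ m

noncomputable def T0 (N n : ℕ) (t : ℝ) : ℝ := ∑ m ∈ range (n + 1), Cc n m * M0 (N + n - m - 1) t
noncomputable def T1 (N n : ℕ) (t : ℝ) : ℝ := ∑ m ∈ range (n + 1), Cc n m * M1 (N + n - m - 1) t
noncomputable def T2 (N n : ℕ) (t : ℝ) : ℝ := ∑ m ∈ range (n + 1), Cc n m * M2 (N + n - m - 1) t

lemma hT0 (N n : ℕ) (t : ℝ) : HasDerivAt (fun t => T0 N n t) (T1 N n t) t := by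
  unfold T0 T1
  exact HasDerivAt.fun_sum fun m _ => (hM0 _ t).const_mul _

lemma hT1 (N n : ℕ) (t : ℝ) : HasDerivAt (fun t => T1 N n t) (T2 N n t) t := by
  unfold T1 T2
  exact HasDerivAt.fun_sum fun m _ => (hM1 _ t).const_mul _

lemma absCc (n m : ℕ) : |Cc n m| = (n.choose m : ℝ) := by
  unfold Cc
  rw [abs_mul, abs_pow, abs_neg, abs_one, one_pow, mul_one, abs_of_nonneg (by positivity)]

lemma sum_choose_cast (n : ℕ) : ∑ m ∈ range (n + 1), (n.choose m : ℝ) = 2 ^ n := by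
  rw [← Nat.cast_sum, Nat.sum_range_choose]
  push_cast; ring

lemma absT0 (N n : ℕ) {t T : ℝ} (h0 : 0 ≤ t) (hT : t ≤ T) :
    |T0 N n t| ≤ 2 ^ n * Real.exp T := by
  unfold T0
  calc |∑ m ∈ range (n + 1), Cc n m * M0 (N + n - m - 1) t|
      ≤ ∑ m ∈ range (n + 1), |Cc n m * M0 (N + n - m - 1) t| := Finset.abs_sum_le_sum_abs _ _
  _ ≤ ∑ m ∈ range (n + 1), (n.choose m : ℝ) * Real.exp T := by
      refine Finset.sum_le_sum fun m _ => ?_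
      rw [abs_mul, absCc]
      exact mul_le_mul_of_nonneg_left (absM0 h0 hT _) (by positivity)
  _ = 2 ^ n * Real.exp T := by rw [← Finset.sum_mul, sum_choose_cast]

lemma absT1 (N n : ℕ) {t T : ℝ} (h0 : 0 ≤ t) (hT : t ≤ T) :
    |T1 N n t| ≤ 2 ^ n * (2 * Real.exp T) := by
  unfold T1
  calc |∑ m ∈ range (n + 1), Cc n m * M1 (N + n - m - 1) t|
      ≤ ∑ m ∈ range (n + 1), |Cc n m * M1 (N + n - m - 1) t| := Finset.abs_sum_le_sum_abs _ _
  _ ≤ ∑ m ∈ range (n + 1), (n.choose m : ℝ) * (2 * Real.exp T) := by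
      refine Finset.sum_le_sum fun m _ => ?_
      rw [abs_mul, absCc]
      exact mul_le_mul_of_nonneg_left (absM1 h0 hT _) (by positivity)
  _ = 2 ^ n * (2 * Real.exp T) := by rw [← Finset.sum_mul, sum_choose_cast]

lemma absT2 (N n : ℕ) {t T : ℝ} (h0 : 0 ≤ t) (hT : t ≤ T) :
    |T2 N n t| ≤ 2 ^ n * (4 * Real.exp T) := by
  unfold T2
  calc |∑ m ∈ range (n + 1), Cc n m * M2 (N + n - m - 1) t|
      ≤ ∑ m ∈ range (n + 1), |Cc n m * M2 (N + n - m - 1) t| := Finset.abs_sum_le_sum_abs _ _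
  _ ≤ ∑ m ∈ range (n + 1), (n.choose m : ℝ) * (4 * Real.exp T) := by
      refine Finset.sum_le_sum fun m _ => ?_
      rw [abs_mul, absCc]
      exact mul_le_mul_of_nonneg_left (absM2 h0 hT _) (by positivity)
  _ = 2 ^ n * (4 * Real.exp T) := by rw [← Finset.sum_mul, sum_choose_cast]

/-- Per-monomial combination. -/
lemma perm (N n m k : ℕ) (t : ℝ) (hk : m + k + 1 = N + n) :
    -((n : ℝ) + 1) * M0 k t + ((N : ℝ) - t - 2) * M1 k t - t * M2 k t
      = -(((m : ℝ) * t ^ k + (k : ℝ) * ((n : ℝ) - (m : ℝ)) * t ^ (k - 1))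
          * Real.exp (-t) / k.factorial) := by
  have hc : (m : ℝ) + (k : ℝ) + 1 = (N : ℝ) + (n : ℝ) := by exact_mod_cast hk
  have hNr : (N : ℝ) = (m : ℝ) + (k : ℝ) + 1 - (n : ℝ) := by linarith
  unfold M0 M1 M2
  rw [hNr]
  match k with
  | 0 => norm_num [Nat.factorial]; ring
  | 1 => norm_num [Nat.factorial]; ring
  | (k + 2) =>
      simp only [Nat.succ_sub_one]
      push_cast
      ring
lemma perj (N n j : ℕ) (hN : 0 < N) (hj : j < n) (t : ℝ) :
    Cc n (j + 1) * (((j + 1 : ℕ) : ℝ) * t ^ (N + n - (j + 1) - 1)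
        * Real.exp (-t) / ((N + n - (j + 1) - 1).factorial : ℝ))
      + Cc n j * (((N + n - j - 1 : ℕ) : ℝ) * ((n : ℝ) - (j : ℝ)) * t ^ (N + n - j - 1 - 1)
        * Real.exp (-t) / ((N + n - j - 1).factorial : ℝ)) = 0 := by
  have he : N + n - (j + 1) - 1 = N + n - j - 1 - 1 := by omega
  have hm : N + n - j - 1 = (N + n - j - 1 - 1) + 1 := by omega
  have hfact : ((N + n - j - 1).factorial : ℝ)
      = ((N + n - j - 1 : ℕ) : ℝ) * ((N + n - j - 1 - 1).factorial : ℝ) := by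
    rw [hm, Nat.factorial_succ, ← hm]
    push_cast
    ring
  have hchoose : ((n.choose (j + 1) : ℕ) : ℝ) * ((j : ℝ) + 1)
      = ((n.choose j : ℕ) : ℝ) * ((n : ℝ) - (j : ℝ)) := by
    have h := Nat.choose_succ_right_eq n j
    have h2 : ((n.choose (j + 1) * (j + 1) : ℕ) : ℝ) = ((n.choose j * (n - j) : ℕ) : ℝ) := by
      exact_mod_cast congrArg (Nat.cast : ℕ → ℝ) h
    push_cast [Nat.cast_sub hj.le] at h2
    linarith
  have hmne : ((N + n - j - 1 : ℕ) : ℝ) ≠ 0 := by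
    have : 0 < N + n - j - 1 := by omega
    positivity
  have hfne : ((N + n - j - 1 - 1).factorial : ℝ) ≠ 0 := by positivity
  rw [he, hfact]
  unfold Cc
  rw [pow_succ]
  field_simp
  push_cast
  linear_combination (-((-1 : ℝ) ^ j * t ^ (N + n - j - 1 - 1) * Real.exp (-t))) * hchoose
lemma telescope (N n : ℕ) (hN : 0 < N) (t : ℝ) :
    ∑ m ∈ range (n + 1),
      Cc n m * (((m : ℝ) * t ^ (N + n - m - 1)
          + ((N + n - m - 1 : ℕ) : ℝ) * ((n : ℝ) - (m : ℝ)) * t ^ (N + n - m - 1 - 1))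
        * Real.exp (-t) / ((N + n - m - 1).factorial : ℝ)) = 0 := by
  set A : ℕ → ℝ := fun m => Cc n m * ((m : ℝ) * t ^ (N + n - m - 1)
      * Real.exp (-t) / ((N + n - m - 1).factorial : ℝ)) with hA
  set B : ℕ → ℝ := fun m => Cc n m * (((N + n - m - 1 : ℕ) : ℝ) * ((n : ℝ) - (m : ℝ))
      * t ^ (N + n - m - 1 - 1) * Real.exp (-t) / ((N + n - m - 1).factorial : ℝ)) with hB
  have h1 : ∑ m ∈ range (n + 1),
      Cc n m * (((m : ℝ) * t ^ (N + n - m - 1)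
          + ((N + n - m - 1 : ℕ) : ℝ) * ((n : ℝ) - (m : ℝ)) * t ^ (N + n - m - 1 - 1))
        * Real.exp (-t) / ((N + n - m - 1).factorial : ℝ))
      = ∑ m ∈ range (n + 1), (A m + B m) :=
    Finset.sum_congr rfl fun m _ => by simp only [hA, hB]; ring
  rw [h1, Finset.sum_add_distrib, Finset.sum_range_succ' A n, Finset.sum_range_succ B n]
  have hA0 : A 0 = 0 := by simp [hA]
  have hBn : B n = 0 := by simp [hB]
  rw [hA0, hBn, add_zero, add_zero, ← Finset.sum_add_distrib]
  refine Finset.sum_eq_zero fun j hj => ?_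
  have hjn : j < n := Finset.mem_range.1 hj
  have := perj N n j hN hjn t
  simp only [hA, hB]
  convert this using 3 <;> push_cast <;> ring

lemma ode (N n : ℕ) (hN : 0 < N) (t : ℝ) :
    -(T0 N n t) + ((N : ℝ) - t - 2) * T1 N n t - t * T2 N n t = (n : ℝ) * T0 N n t := by
  have key := telescope N n hN t
  have h1 : ∀ m ∈ range (n + 1),
      -(Cc n m * M0 (N + n - m - 1) t) + ((N : ℝ) - t - 2) * (Cc n m * M1 (N + n - m - 1) t)
        - t * (Cc n m * M2 (N + n - m - 1) t) - (n : ℝ) * (Cc n m * M0 (N + n - m - 1) t)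
      = -(Cc n m * (((m : ℝ) * t ^ (N + n - m - 1)
          + ((N + n - m - 1 : ℕ) : ℝ) * ((n : ℝ) - (m : ℝ)) * t ^ (N + n - m - 1 - 1))
        * Real.exp (-t) / ((N + n - m - 1).factorial : ℝ))) := by
    intro m hm
    have hk : m + (N + n - m - 1) + 1 = N + n := by
      have := Finset.mem_range.1 hm; omega
    have hperm := perm N n m (N + n - m - 1) t hk
    calc -(Cc n m * M0 (N + n - m - 1) t) + ((N : ℝ) - t - 2) * (Cc n m * M1 (N + n - m - 1) t)
        - t * (Cc n m * M2 (N + n - m - 1) t) - (n : ℝ) * (Cc n m * M0 (N + n - m - 1) t)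
        = Cc n m * (-((n : ℝ) + 1) * M0 (N + n - m - 1) t
            + ((N : ℝ) - t - 2) * M1 (N + n - m - 1) t - t * M2 (N + n - m - 1) t) := by ring
    _ = Cc n m * (-(((m : ℝ) * t ^ (N + n - m - 1)
          + ((N + n - m - 1 : ℕ) : ℝ) * ((n : ℝ) - (m : ℝ)) * t ^ (N + n - m - 1 - 1))
        * Real.exp (-t) / ((N + n - m - 1).factorial : ℝ))) := by rw [hperm]
    _ = -(Cc n m * (((m : ℝ) * t ^ (N + n - m - 1)
          + ((N + n - m - 1 : ℕ) : ℝ) * ((n : ℝ) - (m : ℝ)) * t ^ (N + n - m - 1 - 1))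
        * Real.exp (-t) / ((N + n - m - 1).factorial : ℝ))) := by ring
  have h2 : -(T0 N n t) + ((N : ℝ) - t - 2) * T1 N n t - t * T2 N n t
      - (n : ℝ) * T0 N n t = 0 := by
    unfold T0 T1 T2
    rw [Finset.mul_sum, Finset.mul_sum, Finset.mul_sum, ← Finset.sum_neg_distrib,
      ← Finset.sum_add_distrib, ← Finset.sum_sub_distrib, ← Finset.sum_sub_distrib]
    rw [Finset.sum_congr rfl h1, Finset.sum_neg_distrib, key, neg_zero]
  linarith

lemma poch_pos {x : ℝ} (hx : 0 < x) (n : ℕ) : 0 < poch x n :=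
  Finset.prod_pos fun i _ => by positivity

lemma poch_le {x y : ℝ} (hx : 0 < x) (hxy : x ≤ y) (n : ℕ) : poch x n ≤ poch y n :=
  Finset.prod_le_prod (fun i _ => by positivity) (fun i _ => by linarith)

lemma abs_Acoef {N NR : ℕ} (hN : 0 < N) (hNNR : N ≤ NR) (a : ℝ) (n : ℕ) :
    |Acoef N NR a n| ≤ |a| ^ n / n.factorial := by
  have h1 : 0 < poch (N : ℝ) n := poch_pos (by exact_mod_cast hN) n
  have h2 : poch (N : ℝ) n ≤ poch (NR : ℝ) n :=
    poch_le (by exact_mod_cast hN) (by exact_mod_cast hNNR) n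
  have h3 : |poch (N : ℝ) n / poch (NR : ℝ) n| ≤ 1 := by
    rw [abs_div, abs_of_pos h1, abs_of_pos (lt_of_lt_of_le h1 h2)]
    exact div_le_one_of_le₀ h2 (le_of_lt (lt_of_lt_of_le h1 h2))
  unfold Acoef
  rw [abs_div, abs_mul, abs_pow, abs_of_nonneg (by positivity : (0:ℝ) ≤ (n.factorial : ℝ))]
  calc |poch (N : ℝ) n / poch (NR : ℝ) n| * |a| ^ n / (n.factorial : ℝ)
      ≤ 1 * |a| ^ n / (n.factorial : ℝ) := by gcongr
  _ = |a| ^ n / (n.factorial : ℝ) := by rw [one_mul]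

lemma summable_bound {N NR : ℕ} (hN : 0 < N) (hNNR : N ≤ NR) (a : ℝ) {C : ℝ} (hC : 0 ≤ C)
    (f : ℕ → ℝ) (hf : ∀ n, |f n| ≤ 2 ^ n * C) :
    Summable (fun n => Acoef N NR a n * f n) := by
  refine Summable.of_norm_bounded
    ((Real.summable_pow_div_factorial (2 * |a|)).mul_left C) fun n => ?_
  rw [Real.norm_eq_abs, abs_mul]
  calc |Acoef N NR a n| * |f n| ≤ (|a| ^ n / n.factorial) * (2 ^ n * C) :=
        mul_le_mul (abs_Acoef hN hNNR a n) (hf n) (abs_nonneg _) (by positivity)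
  _ = C * ((2 * |a|) ^ n / n.factorial) := by rw [mul_pow]; ring

lemma pdf_eq (N NR : ℕ) (t a : ℝ) :
    pdfZF N NR t a = ∑' n : ℕ, Acoef N NR a n * T0 N n t := by
  unfold pdfZF
  refine tsum_congr fun n => ?_
  congr 1
  unfold T0
  refine Finset.sum_congr rfl fun m _ => ?_
  unfold Cc M0
  ring

end Stmt11Aux


open Stmt11Aux

set_option maxHeartbeats 1600000

/-- For fixed `t > 0` the map `a ↦ p(t,a)` is differentiable on `ℝ`, and
`a ∂_a p(t,a) = −p(t,a) + (N − t − 2) p⁽¹⁾(t,a) − t p⁽²⁾(t,a)`,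
where `p⁽¹⁾, p⁽²⁾` are partial derivatives with respect to `t`. -/
theorem stmt11 (N NR : ℕ) (hN : 0 < N) (hNNR : N ≤ NR) :
    (∀ t : ℝ, 0 < t → Differentiable ℝ (fun a => pdfZF N NR t a)) ∧
    ∀ t : ℝ, 0 < t → ∀ a : ℝ,
      a * deriv (fun a' => pdfZF N NR t a') a =
        -pdfZF N NR t a
          + ((N : ℝ) - t - 2) * deriv (fun t' => pdfZF N NR t' a) t
          - t * iteratedDeriv 2 (fun t' => pdfZF N NR t' a) t := by
  have Hda : ∀ t : ℝ, 0 < t → ∀ a : ℝ,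
      HasDerivAt (fun a' => pdfZF N NR t a')
        (∑' n : ℕ, (poch N n / poch NR n / (n.factorial : ℝ) * T0 N n t)
          * ((n : ℝ) * a ^ (n - 1))) a := by
    intro t ht a
    have hfun : (fun a' : ℝ => pdfZF N NR t a')
        = fun a' => ∑' n : ℕ, (poch N n / poch NR n / (n.factorial : ℝ) * T0 N n t) * a' ^ n := by
      funext a'
      rw [pdf_eq]
      exact tsum_congr fun n => by unfold Acoef; ring
    rw [hfun]
    have hR1 : (1 : ℝ) ≤ |a| + 1 := by linarith [abs_nonneg a]
    have haR : a ∈ Metric.ball (0 : ℝ) (|a| + 1) := by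
      simp only [Metric.mem_ball, Real.dist_eq, sub_zero]
      linarith
    refine hasDerivAt_tsum_of_isPreconnected
      (g := fun (n : ℕ) (a' : ℝ) =>
        (poch N n / poch NR n / (n.factorial : ℝ) * T0 N n t) * a' ^ n)
      (g' := fun (n : ℕ) (y : ℝ) =>
        (poch N n / poch NR n / (n.factorial : ℝ) * T0 N n t) * ((n : ℝ) * y ^ (n - 1)))
      (u := fun n => Real.exp (t + 1) * ((4 * (|a| + 1)) ^ n / (n.factorial : ℝ)))
      ((Real.summable_pow_div_factorial _).mul_left _)
      Metric.isOpen_ball (convex_ball (0 : ℝ) (|a| + 1)).isPreconnected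
      (fun n y _ => (hasDerivAt_pow n y).const_mul _) ?_ haR ?_ haR
    · intro n y hy
      have hy' : |y| < |a| + 1 := by
        simpa only [Metric.mem_ball, Real.dist_eq, sub_zero] using hy
      have hA1 : |Acoef N NR 1 n| ≤ 1 / (n.factorial : ℝ) := by
        simpa using abs_Acoef hN hNNR 1 n
      have hcoef : |poch (N : ℝ) n / poch (NR : ℝ) n / (n.factorial : ℝ) * T0 N n t|
          ≤ (1 / (n.factorial : ℝ)) * (2 ^ n * Real.exp (t + 1)) := by
        have h1 : poch (N : ℝ) n / poch (NR : ℝ) n / (n.factorial : ℝ) * T0 N n t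
            = Acoef N NR 1 n * T0 N n t := by unfold Acoef; ring
        rw [h1, abs_mul]
        exact mul_le_mul hA1 (absT0 N n ht.le (by linarith)) (abs_nonneg _) (by positivity)
      have hkey : (n : ℝ) * |y| ^ (n - 1) ≤ 2 ^ n * (|a| + 1) ^ n := by
        have h2 : (n : ℝ) ≤ 2 ^ n := by exact_mod_cast n.lt_two_pow_self.le
        have h3 : |y| ^ (n - 1) ≤ (|a| + 1) ^ (n - 1) :=
          pow_le_pow_left₀ (abs_nonneg y) hy'.le _
        have h4 : (|a| + 1) ^ (n - 1) ≤ (|a| + 1) ^ n :=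
          pow_le_pow_right₀ hR1 (Nat.sub_le n 1)
        exact mul_le_mul h2 (h3.trans h4) (by positivity) (by positivity)
      calc ‖poch (N : ℝ) n / poch (NR : ℝ) n / (n.factorial : ℝ) * T0 N n t
            * ((n : ℝ) * y ^ (n - 1))‖
          = |poch (N : ℝ) n / poch (NR : ℝ) n / (n.factorial : ℝ) * T0 N n t|
            * ((n : ℝ) * |y| ^ (n - 1)) := by
            rw [Real.norm_eq_abs, abs_mul]
            congr 1
            rw [abs_mul, abs_pow, Nat.abs_cast]
      _ ≤ ((1 / (n.factorial : ℝ)) * (2 ^ n * Real.exp (t + 1))) * (2 ^ n * (|a| + 1) ^ n) :=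
            mul_le_mul hcoef hkey (by positivity) (by positivity)
      _ = Real.exp (t + 1) * ((4 * (|a| + 1)) ^ n / (n.factorial : ℝ)) := by
            rw [show (4 * (|a| + 1) : ℝ) = 2 * (2 * (|a| + 1)) from by ring, mul_pow, mul_pow]
            ring
    · exact (summable_bound hN hNNR a (Real.exp_pos (t + 1)).le (fun n => T0 N n t)
        (fun n => absT0 N n ht.le (by linarith))).congr
        (fun n => by unfold Acoef; ring)
  refine ⟨fun t ht a => (Hda t ht a).differentiableAt, fun t ht a => ?_⟩
  have hts : t ∈ Set.Ioo (0 : ℝ) (t + 1) := ⟨ht, lt_add_one t⟩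
  have hfunT : (fun t' => pdfZF N NR t' a)
      = fun t' => ∑' n : ℕ, Acoef N NR a n * T0 N n t' :=
    funext fun t' => pdf_eq N NR t' a
  have hsum0 : ∀ y : ℝ, 0 ≤ y → y ≤ t + 1 → Summable (fun n => Acoef N NR a n * T0 N n y) :=
    fun y h0 hT => summable_bound hN hNNR a (Real.exp_pos (t + 1)).le _
      (fun n => absT0 N n h0 hT)
  have hsum1 : ∀ y : ℝ, 0 ≤ y → y ≤ t + 1 → Summable (fun n => Acoef N NR a n * T1 N n y) :=
    fun y h0 hT => summable_bound hN hNNR a (by positivity) _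
      (fun n => absT1 N n h0 hT)
  have hsum2 : ∀ y : ℝ, 0 ≤ y → y ≤ t + 1 → Summable (fun n => Acoef N NR a n * T2 N n y) :=
    fun y h0 hT => summable_bound hN hNNR a (by positivity) _
      (fun n => absT2 N n h0 hT)
  have HD1 : ∀ y ∈ Set.Ioo (0 : ℝ) (t + 1),
      HasDerivAt (fun t' => ∑' n : ℕ, Acoef N NR a n * T0 N n t')
        (∑' n : ℕ, Acoef N NR a n * T1 N n y) y := by
    intro y hy
    refine hasDerivAt_tsum_of_isPreconnected
      (g := fun (n : ℕ) (t' : ℝ) => Acoef N NR a n * T0 N n t')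
      (g' := fun (n : ℕ) (z : ℝ) => Acoef N NR a n * T1 N n z)
      (u := fun n => (2 * Real.exp (t + 1)) * ((2 * |a|) ^ n / (n.factorial : ℝ)))
      ((Real.summable_pow_div_factorial _).mul_left _)
      isOpen_Ioo (convex_Ioo (0 : ℝ) (t + 1)).isPreconnected
      (fun n z _ => (hT0 N n z).const_mul _) ?_ hts (hsum0 t ht.le (lt_add_one t).le) hy
    intro n z hz
    rw [Real.norm_eq_abs, abs_mul]
    calc |Acoef N NR a n| * |T1 N n z|
        ≤ (|a| ^ n / (n.factorial : ℝ)) * (2 ^ n * (2 * Real.exp (t + 1))) :=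
          mul_le_mul (abs_Acoef hN hNNR a n) (absT1 N n hz.1.le hz.2.le)
            (abs_nonneg _) (by positivity)
    _ = (2 * Real.exp (t + 1)) * ((2 * |a|) ^ n / (n.factorial : ℝ)) := by
          rw [mul_pow]; ring
  have HD2 : ∀ y ∈ Set.Ioo (0 : ℝ) (t + 1),
      HasDerivAt (fun t' => ∑' n : ℕ, Acoef N NR a n * T1 N n t')
        (∑' n : ℕ, Acoef N NR a n * T2 N n y) y := by
    intro y hy
    refine hasDerivAt_tsum_of_isPreconnected
      (g := fun (n : ℕ) (t' : ℝ) => Acoef N NR a n * T1 N n t')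
      (g' := fun (n : ℕ) (z : ℝ) => Acoef N NR a n * T2 N n z)
      (u := fun n => (4 * Real.exp (t + 1)) * ((2 * |a|) ^ n / (n.factorial : ℝ)))
      ((Real.summable_pow_div_factorial _).mul_left _)
      isOpen_Ioo (convex_Ioo (0 : ℝ) (t + 1)).isPreconnected
      (fun n z _ => (hT1 N n z).const_mul _) ?_ hts (hsum1 t ht.le (lt_add_one t).le) hy
    intro n z hz
    rw [Real.norm_eq_abs, abs_mul]
    calc |Acoef N NR a n| * |T2 N n z|
        ≤ (|a| ^ n / (n.factorial : ℝ)) * (2 ^ n * (4 * Real.exp (t + 1))) :=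
          mul_le_mul (abs_Acoef hN hNNR a n) (absT2 N n hz.1.le hz.2.le)
            (abs_nonneg _) (by positivity)
    _ = (4 * Real.exp (t + 1)) * ((2 * |a|) ^ n / (n.factorial : ℝ)) := by
          rw [mul_pow]; ring
  have hd1 : deriv (fun t' => pdfZF N NR t' a) t = ∑' n : ℕ, Acoef N NR a n * T1 N n t := by
    rw [hfunT]; exact (HD1 t hts).deriv
  have hd2 : iteratedDeriv 2 (fun t' => pdfZF N NR t' a) t
      = ∑' n : ℕ, Acoef N NR a n * T2 N n t := by
    rw [iteratedDeriv_succ, iteratedDeriv_one]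
    have hev : deriv (fun t' => pdfZF N NR t' a)
        =ᶠ[nhds t] fun y => ∑' n : ℕ, Acoef N NR a n * T1 N n y := by
      filter_upwards [isOpen_Ioo.mem_nhds hts] with y hy
      rw [hfunT]
      exact (HD1 y hy).deriv
    rw [hev.deriv_eq]
    exact (HD2 t hts).deriv
  have hda : deriv (fun a' => pdfZF N NR t a') a
      = ∑' n : ℕ, (poch N n / poch NR n / (n.factorial : ℝ) * T0 N n t)
          * ((n : ℝ) * a ^ (n - 1)) := (Hda t ht a).deriv
  rw [hda, hd1, hd2, pdf_eq]
  rw [← tsum_mul_left, ← tsum_neg, ← tsum_mul_left, ← tsum_mul_left]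
  have S0 := hsum0 t ht.le (lt_add_one t).le
  have S1 := hsum1 t ht.le (lt_add_one t).le
  have S2 := hsum2 t ht.le (lt_add_one t).le
  rw [← Summable.tsum_add S0.neg (S1.mul_left _), ← Summable.tsum_sub (S0.neg.add (S1.mul_left _)) (S2.mul_left _)]
  refine tsum_congr fun n => ?_
  have hode := ode N n hN t
  have hrhs : -(Acoef N NR a n * T0 N n t)
      + ((N : ℝ) - t - 2) * (Acoef N NR a n * T1 N n t)
      - t * (Acoef N NR a n * T2 N n t)
      = Acoef N NR a n * ((n : ℝ) * T0 N n t) := by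
    linear_combination (Acoef N NR a n) * hode
  rw [hrhs]
  cases n with
  | zero => simp [Acoef]
  | succ k =>
      unfold Acoef
      rw [pow_succ]
      push_cast
      ring
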